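/- For n ≥ 2, the number of ascending runs of length exactly 1 in all permutations of [n] equals n!·(n+4)/6. -/

import Mathlib

open Finset Equiv

section Desc

variable {n k : ℕ}

open scoped Classical in
private lemma desc_count (g : Fin k ↪ Fin n) :
    ((Finset.univ : Finset (Equiv.Perm (Fin n))).filter
      (fun σ => ∀ i j : Fin k, i < j → σ (g j) < σ (g i))).card * k.factorial
    = n.factorial := by
  classical
  set A := ((Finset.univ : Finset (Equiv.Perm (Fin n))).filter
      (fun σ => ∀ i j : Fin k, i < j → σ (g j) < σ (g i))) with hA
  have key : (A ×ˢ (Finset.univ : Finset (Equiv.Perm (Fin k)))).card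
      = (Finset.univ : Finset (Equiv.Perm (Fin n))).card := by
    have inj_f : ∀ π : Equiv.Perm (Fin n),
        Function.Injective (fun j : Fin k => OrderDual.toDual (π (g j))) := by
      intro π x y hxy
      simp only [OrderDual.toDual_inj] at hxy
      exact g.injective (π.injective hxy)
    refine Finset.card_nbij'
      (fun p => p.1 * p.2.viaEmbedding g)
      (fun π => (π * (Tuple.sort (fun j => OrderDual.toDual (π (g j)))).viaEmbedding g,
        (Tuple.sort (fun j => OrderDual.toDual (π (g j))))⁻¹))
      (fun p _ => Finset.mem_univ _) ?_ ?_ ?_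
    · -- membership of inverse
      intro π _
      set ρ := Tuple.sort (fun j => OrderDual.toDual (π (g j))) with hρ
      refine Finset.mem_product.2 ⟨?_, Finset.mem_univ _⟩
      rw [hA, Finset.mem_filter]
      refine ⟨Finset.mem_univ _, ?_⟩
      intro i j hij
      have hmono : Monotone ((fun j => OrderDual.toDual (π (g j))) ∘ ρ) :=
        Tuple.monotone_sort _
      have hsm : StrictMono ((fun j => OrderDual.toDual (π (g j))) ∘ ρ) :=
        hmono.strictMono_of_injective ((inj_f π).comp ρ.injective)
      have h2 := hsm hij
      simp only [Function.comp_apply, OrderDual.toDual_lt_toDual] at h2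
      simpa [Equiv.Perm.mul_apply, Equiv.Perm.viaEmbedding_apply] using h2
    · -- left inverse
      rintro ⟨σ, τ⟩ hp
      rw [Finset.mem_coe, Finset.mem_product, hA, Finset.mem_filter] at hp
      obtain ⟨⟨-, hσ⟩, -⟩ := hp
      set f := fun j : Fin k => OrderDual.toDual ((σ * τ.viaEmbedding g) (g j)) with hf
      have happ : ∀ j : Fin k, f j = OrderDual.toDual (σ (g (τ j))) := by
        intro j; simp [hf, Equiv.Perm.mul_apply, Equiv.Perm.viaEmbedding_apply]
      have hfinj : Function.Injective f := by
        intro x y hxy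
        rw [happ, happ, OrderDual.toDual_inj] at hxy
        exact τ.injective (g.injective (σ.injective hxy))
      have hρ : Tuple.sort f = τ⁻¹ := by
        have h1 : Monotone (f ∘ (τ⁻¹ : Equiv.Perm (Fin k))) := by
          have hsm : StrictMono (f ∘ (τ⁻¹ : Equiv.Perm (Fin k))) := by
            intro i j hij
            simp only [Function.comp_apply, happ, Equiv.Perm.coe_inv, Equiv.apply_symm_apply,
              OrderDual.toDual_lt_toDual]
            exact hσ i j hij
          exact hsm.monotone
        have h2 := Tuple.unique_monotone (f := f) h1 (Tuple.monotone_sort f)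
        have h3 : (⇑(τ⁻¹ : Equiv.Perm (Fin k))) = ⇑(Tuple.sort f) := by
          funext x
          exact hfinj (congrFun h2 x)
        exact (Equiv.ext fun x => (congrFun h3 x).symm)
      have hvia : τ.viaEmbedding g * (τ⁻¹).viaEmbedding g = 1 := by
        rw [← Equiv.Perm.viaEmbeddingHom_apply, ← Equiv.Perm.viaEmbeddingHom_apply,
          ← map_mul, mul_inv_cancel, map_one]
      simp only [← hf, hρ]
      ext1
      · simp only [mul_assoc, hvia, mul_one]
      · simp
    · -- right inverse
      intro π _
      set ρ := Tuple.sort (fun j => OrderDual.toDual (π (g j))) with hρ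
      have hvia : ρ.viaEmbedding g * (ρ⁻¹).viaEmbedding g = 1 := by
        rw [← Equiv.Perm.viaEmbeddingHom_apply, ← Equiv.Perm.viaEmbeddingHom_apply,
          ← map_mul, mul_inv_cancel, map_one]
      simp only [mul_assoc, ← hρ, hvia, mul_one]
  rw [Finset.card_product, Finset.card_univ, Finset.card_univ, Fintype.card_perm,
    Fintype.card_perm, Fintype.card_fin, Fintype.card_fin] at key
  exact key

open scoped Classical in
private lemma card2 {n : ℕ} (a b : Fin n) (hab : a ≠ b) :
    ((Finset.univ : Finset (Equiv.Perm (Fin n))).filter (fun σ => σ b < σ a)).card * 2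
    = n.factorial := by
  classical
  have hg : Function.Injective (![a, b] : Fin 2 → Fin n) := by
    intro i j h
    fin_cases i <;> fin_cases j <;> simp_all
  have h := desc_count (n := n) ⟨![a, b], hg⟩
  have hfe : ((Finset.univ : Finset (Equiv.Perm (Fin n))).filter (fun σ => σ b < σ a))
      = (Finset.univ : Finset (Equiv.Perm (Fin n))).filter
        (fun σ => ∀ i j : Fin 2, i < j →
          σ ((⟨![a, b], hg⟩ : Fin 2 ↪ Fin n) j) < σ ((⟨![a, b], hg⟩ : Fin 2 ↪ Fin n) i)) := by
    apply Finset.filter_congr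
    intro σ _
    constructor
    · intro hlt i j hij
      fin_cases i <;> fin_cases j <;> simp_all <;> omega
    · intro hall
      have := hall 0 1 (by norm_num)
      simpa using this
  rw [hfe]
  simpa [Nat.factorial] using h

open scoped Classical in
private lemma card3 {n : ℕ} (a b c : Fin n) (hab : a ≠ b) (hac : a ≠ c) (hbc : b ≠ c) :
    ((Finset.univ : Finset (Equiv.Perm (Fin n))).filter
      (fun σ => σ b < σ a ∧ σ c < σ b)).card * 6 = n.factorial := by
  classical
  have hg : Function.Injective (![a, b, c] : Fin 3 → Fin n) := by
    intro i j h
    fin_cases i <;> fin_cases j <;> simp_all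
  have h := desc_count (n := n) ⟨![a, b, c], hg⟩
  have hfe : ((Finset.univ : Finset (Equiv.Perm (Fin n))).filter
      (fun σ => σ b < σ a ∧ σ c < σ b))
      = (Finset.univ : Finset (Equiv.Perm (Fin n))).filter
        (fun σ => ∀ i j : Fin 3, i < j →
          σ ((⟨![a, b, c], hg⟩ : Fin 3 ↪ Fin n) j) < σ ((⟨![a, b, c], hg⟩ : Fin 3 ↪ Fin n) i)) := by
    apply Finset.filter_congr
    intro σ _
    constructor
    · rintro ⟨h1, h2⟩ i j hij
      fin_cases i <;> fin_cases j <;> simp_all <;> first | omega | exact h2.trans h1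
    · intro hall
      exact ⟨by simpa using hall 0 1 (by decide),
        by simpa using hall 1 2 (by decide)⟩
  rw [hfe]
  simpa [Nat.factorial] using h

end Desc

/-- The word `σ₁ … σₙ` of a permutation of `[n]` (positions `1,…,n`), with the
boundary conventions `σ₀ = n+1` and `σ_{n+1} = 0`. -/
def rval (n : ℕ) (σ : Equiv.Perm (Fin n)) (t : ℕ) : ℕ :=
  if t = 0 then n + 1
  else if h : t - 1 < n then (σ ⟨t - 1, h⟩ : ℕ) + 1
  else 0

private lemma rval_pos' {n : ℕ} (σ : Equiv.Perm (Fin n)) (t s : ℕ) (h1 : 1 ≤ t)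
    (hs : s = t - 1) (hsn : s < n) : rval n σ t = (σ ⟨s, hsn⟩ : ℕ) + 1 := by
  have ht : t ≠ 0 := by omega
  have ht' : t - 1 < n := by omega
  subst hs
  simp [rval, ht, ht']

private lemma rval_zero {n : ℕ} (σ : Equiv.Perm (Fin n)) : rval n σ 0 = n + 1 := by
  simp [rval]

private lemma rval_top {n : ℕ} (σ : Equiv.Perm (Fin n)) : rval n σ (n + 1) = 0 := by
  simp [rval]

open scoped Classical in
theorem stmt10 (n : ℕ) (hn : 2 ≤ n) :
    6 * ∑ σ : Equiv.Perm (Fin n),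
        ((Finset.Icc 1 n).filter
          (fun i => rval n σ (i - 1) > rval n σ i ∧ rval n σ i > rval n σ (i + 1))).card
    = n.factorial * (n + 4) := by
  classical
  have swap : (∑ σ : Equiv.Perm (Fin n),
        ((Finset.Icc 1 n).filter
          (fun i => rval n σ (i - 1) > rval n σ i ∧ rval n σ i > rval n σ (i + 1))).card)
      = ∑ i ∈ Finset.Icc 1 n,
          ((Finset.univ : Finset (Equiv.Perm (Fin n))).filter
            (fun σ => rval n σ (i - 1) > rval n σ i ∧ rval n σ i > rval n σ (i + 1))).card := by
    simp_rw [Finset.card_filter]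
    exact Finset.sum_comm
  rw [swap, Finset.mul_sum]
  have key : ∀ i ∈ Finset.Icc 1 n,
      6 * ((Finset.univ : Finset (Equiv.Perm (Fin n))).filter
        (fun σ => rval n σ (i - 1) > rval n σ i ∧ rval n σ i > rval n σ (i + 1))).card
      = if i = 1 ∨ i = n then 3 * n.factorial else n.factorial := by
    intro i hi
    rw [Finset.mem_Icc] at hi
    by_cases hi1 : i = 1
    · subst hi1
      rw [if_pos (Or.inl rfl)]
      have h0 : (0 : ℕ) < n := by omega
      have h1 : (1 : ℕ) < n := by omega
      have hfe : ((Finset.univ : Finset (Equiv.Perm (Fin n))).filter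
            (fun σ => rval n σ (1 - 1) > rval n σ 1 ∧ rval n σ 1 > rval n σ (1 + 1)))
          = ((Finset.univ : Finset (Equiv.Perm (Fin n))).filter
            (fun σ => σ ⟨1, h1⟩ < σ ⟨0, h0⟩)) := by
        apply Finset.filter_congr
        intro σ _
        rw [show (1 : ℕ) - 1 = 0 from rfl, rval_zero,
          rval_pos' σ 1 0 (by omega) (by omega) h0,
          rval_pos' σ (1 + 1) 1 (by omega) (by omega) h1]
        have hlt : ((σ ⟨0, h0⟩ : Fin n) : ℕ) < n := (σ _).isLt
        simp only [gt_iff_lt, Fin.lt_def]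
        omega
      rw [hfe]
      have := card2 (⟨0, h0⟩ : Fin n) ⟨1, h1⟩ (fun h => by
        have := congrArg Fin.val h; simp at this)
      omega
    · by_cases hin : i = n
      · rw [if_pos (Or.inr hin)]
        have ha : i - 1 - 1 < n := by omega
        have hb : i - 1 < n := by omega
        have hfe : ((Finset.univ : Finset (Equiv.Perm (Fin n))).filter
              (fun σ => rval n σ (i - 1) > rval n σ i ∧ rval n σ i > rval n σ (i + 1)))
            = ((Finset.univ : Finset (Equiv.Perm (Fin n))).filter
              (fun σ => σ ⟨i - 1, hb⟩ < σ ⟨i - 1 - 1, ha⟩)) := by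
          apply Finset.filter_congr
          intro σ _
          rw [rval_pos' σ (i - 1) (i - 1 - 1) (by omega) (by omega) ha,
            rval_pos' σ i (i - 1) (by omega) (by omega) hb,
            show i + 1 = n + 1 by omega, rval_top]
          simp only [gt_iff_lt, Fin.lt_def]
          omega
        rw [hfe]
        have := card2 (⟨i - 1 - 1, ha⟩ : Fin n) ⟨i - 1, hb⟩ (fun h => by
          have := congrArg Fin.val h; simp at this; omega)
        omega
      · rw [if_neg (by tauto)]
        have ha : i - 1 - 1 < n := by omega
        have hb : i - 1 < n := by omega
        have hc : i < n := by omega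
        have hfe : ((Finset.univ : Finset (Equiv.Perm (Fin n))).filter
              (fun σ => rval n σ (i - 1) > rval n σ i ∧ rval n σ i > rval n σ (i + 1)))
            = ((Finset.univ : Finset (Equiv.Perm (Fin n))).filter
              (fun σ => σ ⟨i - 1, hb⟩ < σ ⟨i - 1 - 1, ha⟩ ∧ σ ⟨i, hc⟩ < σ ⟨i - 1, hb⟩)) := by
          apply Finset.filter_congr
          intro σ _
          rw [rval_pos' σ (i - 1) (i - 1 - 1) (by omega) (by omega) ha,
            rval_pos' σ i (i - 1) (by omega) (by omega) hb,
            rval_pos' σ (i + 1) i (by omega) (by omega) hc]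
          simp only [gt_iff_lt, Fin.lt_def]
          omega
        rw [hfe]
        have := card3 (⟨i - 1 - 1, ha⟩ : Fin n) ⟨i - 1, hb⟩ ⟨i, hc⟩
          (fun h => by have := congrArg Fin.val h; simp at this; omega)
          (fun h => by have := congrArg Fin.val h; simp at this; omega)
          (fun h => by have := congrArg Fin.val h; simp at this; omega)
        omega
  rw [Finset.sum_congr rfl key]
  rw [Finset.sum_ite]
  have hfilter : (Finset.Icc 1 n).filter (fun i => i = 1 ∨ i = n) = {1, n} := by
    ext i
    simp only [Finset.mem_filter, Finset.mem_Icc, Finset.mem_insert, Finset.mem_singleton]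
    omega
  have hcard1 : ((Finset.Icc 1 n).filter (fun i => i = 1 ∨ i = n)).card = 2 := by
    rw [hfilter, Finset.card_insert_of_notMem (by simp; omega), Finset.card_singleton]
  have hcard2 : ((Finset.Icc 1 n).filter (fun i => ¬(i = 1 ∨ i = n))).card = n - 2 := by
    have htot := Finset.card_filter_add_card_filter_not
      (s := Finset.Icc 1 n) (p := fun i => i = 1 ∨ i = n)
    rw [hcard1, Nat.card_Icc] at htot
    omega
  rw [Finset.sum_const, Finset.sum_const, hcard1, hcard2, smul_eq_mul, smul_eq_mul]
  obtain ⟨m, rfl⟩ := Nat.exists_eq_add_of_le hn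
  have hm : 2 + m - 2 = m := by omega
  rw [hm]
  ring
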